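/- Let F be a k-CNF over n variables with a tree-like Res(l) refutation with L leaves. Then F has a Resolution refutation of size at most (2n+1)^{l·⌈log₂ L⌉ + max{k,l}}; in particular, if l and l·⌈log₂ L⌉ + k are poly-logarithmic in n, the resulting Resolution refutation has quasi-polynomial size. -/

import Mathlib

/-- Propositional variables. -/
abbrev PVar := ℕ

/-- A literal: a variable together with a sign (`true` = the positive literal `x`,
`false` = the negated literal `¬x`). -/
abbrev PLit := PVar × Bool

/-- Negation of a literal. -/
def PLit.neg (m : PLit) : PLit := (m.1, !m.2)

/-- A clause: a finite set of literals, read as their disjunction.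
Its width is its cardinality. -/
abbrev PClause := Finset PLit

/-- A CNF formula: a finite set of clauses, read as their conjunction. -/
abbrev PCnf := Finset PClause

/-- A term: a finite set of literals, read as their conjunction. -/
abbrev PTerm := Finset PLit

/-- A DNF: a finite set of terms, read as their disjunction. -/
abbrev PDnf := Finset PTerm

/-- `D` is an `l`-DNF: every term of `D` has at most `l` literals. -/
def IsLDnf (l : ℕ) (D : PDnf) : Prop := ∀ T ∈ D, T.card ≤ l

/-- The negation `¬C` of a clause `C = m₁ ∨ … ∨ m_t`, i.e. the term `¬m₁ ∧ … ∧ ¬m_t`. -/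
def PClause.negTerm (C : PClause) : PTerm := C.image PLit.neg

/-- A clause viewed as a DNF consisting of singleton terms. -/
def PClause.toDnf (C : PClause) : PDnf := C.image (fun m => ({m} : PTerm))

/-- The disjunction `¬l₁ ∨ … ∨ ¬l_s` of the negations of the literals of the
term `T = l₁ ∧ … ∧ l_s`, as a DNF of singleton terms. -/
def PTerm.negLits (T : PTerm) : PDnf := T.image (fun m => ({m.neg} : PTerm))

/-- Binary proof trees whose nodes are labelled by DNFs. -/
inductive PTree : Type where
  | leaf (D : PDnf) : PTree
  | node (D : PDnf) (t₁ t₂ : PTree) : PTree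

namespace PTree

/-- The label at the root of the tree. -/
def concl : PTree → PDnf
  | .leaf D => D
  | .node D _ _ => D

/-- The number of leaves of the tree. -/
def leaves : PTree → ℕ
  | .leaf _ => 1
  | .node _ t₁ t₂ => t₁.leaves + t₂.leaves

/-- The total number of nodes (proof lines) of the tree. -/
def size : PTree → ℕ
  | .leaf _ => 1
  | .node _ t₁ t₂ => t₁.size + t₂.size + 1

/-- The list of all labels occurring in the tree. -/
def labels : PTree → List PDnf
  | .leaf D => [D]
  | .node D t₁ t₂ => D :: (t₁.labels ++ t₂.labels)

/-- Structural validity of a tree-like Res derivation from the set `H` of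
hypothesis DNFs: every leaf is a hypothesis or an axiom
`(l₁∧…∧l_s) ∨ ¬l₁ ∨ … ∨ ¬l_s` (with `s ≥ 1`), and every internal node with
children `A ∨ (l₁∧…∧l_s)` and `B ∨ ¬l₁ ∨ … ∨ ¬l_s` is labelled by the
cut `A ∨ B`. -/
def okStruct (H : Finset PDnf) : PTree → Prop
  | .leaf D => D ∈ H ∨ ∃ T : PTerm, T.Nonempty ∧ D = insert T T.negLits
  | .node D t₁ t₂ => t₁.okStruct H ∧ t₂.okStruct H ∧
      ∃ (T : PTerm) (A B : PDnf), T.Nonempty ∧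
        t₁.concl = insert T A ∧ t₂.concl = B ∪ T.negLits ∧ D = A ∪ B

/-- A valid tree-like Res(l) derivation from the hypotheses `H`: it is
structurally valid and every proof line is an `l`-DNF. -/
def valid (H : Finset PDnf) (l : ℕ) (t : PTree) : Prop :=
  t.okStruct H ∧ ∀ D ∈ t.labels, IsLDnf l D

/-- The number of leaves labelled by an axiom rather than by a hypothesis. -/
def axLeafCount (H : Finset PDnf) : PTree → ℕ
  | .leaf D => if D ∈ H then 0 else 1
  | .node _ t₁ t₂ => t₁.axLeafCount H + t₂.axLeafCount H

end PTree

/-- The set of hypothesis DNFs associated to a CNF: each clause read as a DNF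
of singleton terms. -/
def PCnf.toHyps (F : PCnf) : Finset PDnf := F.image PClause.toDnf

/-- `t` is a tree-like Res(l) refutation of the CNF `F`: a valid tree-like
Res(l) derivation from the clauses of `F` whose root is the empty DNF. -/
def TreeResRefutation (F : PCnf) (l : ℕ) (t : PTree) : Prop :=
  t.valid F.toHyps l ∧ t.concl = ∅

/-- Resolution inference: the clause `C` is obtained from two clauses
`A ∨ x` and `B ∨ ¬x` occurring in `prev` by the resolution rule, yielding `A ∨ B`. -/
def ResStep (prev : List PClause) (C : PClause) : Prop :=
  ∃ A ∈ prev, ∃ B ∈ prev, ∃ x : PVar,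
    (x, true) ∈ A ∧ (x, false) ∈ B ∧
    C = A.erase (x, true) ∪ B.erase (x, false)

/-- `π` is a resolution derivation from the CNF `F`: every clause of `π`
belongs to `F` or follows from two earlier clauses by the resolution rule. -/
def IsResDeriv (F : PCnf) (π : List PClause) : Prop :=
  ∀ i : Fin π.length, π.get i ∈ F ∨ ResStep (π.take i) (π.get i)

/-- `π` is a resolution derivation of the clause `C` from the CNF `F`
(its last clause is `C`); a refutation when `C = ∅`. Its size is `π.length`
and its width is the maximum cardinality of a clause in `π`. -/
def ResDerivOf (F : PCnf) (C : PClause) (π : List PClause) : Prop :=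
  IsResDeriv F π ∧ π.getLast? = some C

/-- A partial assignment: maps some variables to truth values. -/
abbrev PAssign := PVar → Option Bool

/-- The restriction `F|ρ`: delete every clause containing a literal satisfied
by `ρ`, and delete from the remaining clauses every literal falsified by `ρ`. -/
def PCnf.restrict (F : PCnf) (ρ : PAssign) : PCnf :=
  (F.filter (fun C => ∀ m ∈ C, ρ m.1 ≠ some m.2)).image
    (fun C => C.filter (fun m => ρ m.1 ≠ some (!m.2)))

/-! ### Auxiliary development -/

theorem PLit.neg_neg (m : PLit) : m.neg.neg = m := by
  cases m with
  | mk v b => simp [PLit.neg]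

theorem PLit.neg_ne (m : PLit) : m.neg ≠ m := by
  cases m with
  | mk v b => simp [PLit.neg]

/-- Pointwise negation of a set of literals. -/
def nimg (s : Finset PLit) : Finset PLit := s.image PLit.neg

theorem mem_nimg {a : PLit} {s : Finset PLit} : a ∈ nimg s ↔ a.neg ∈ s := by
  constructor
  · intro h
    obtain ⟨b, hb, rfl⟩ := Finset.mem_image.1 h
    rwa [PLit.neg_neg]
  · intro h
    exact Finset.mem_image.2 ⟨a.neg, h, PLit.neg_neg a⟩

theorem nimg_mono {s t : Finset PLit} (h : s ⊆ t) : nimg s ⊆ nimg t :=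
  Finset.image_subset_image h

theorem nimg_insert (a : PLit) (s : Finset PLit) :
    nimg (insert a s) = insert a.neg (nimg s) := Finset.image_insert _ _ _

theorem nimg_union (s t : Finset PLit) : nimg (s ∪ t) = nimg s ∪ nimg t :=
  Finset.image_union _ _

theorem nimg_card_le (s : Finset PLit) : (nimg s).card ≤ s.card :=
  Finset.card_image_le

@[simp] theorem nimg_empty : nimg ∅ = ∅ := rfl

/-- Width-`w` resolution derivability from `F`: every clause in the
derivation has at most `w` literals. -/
inductive DerW (F : PCnf) (w : ℕ) : PClause → Prop
  | hyp {C : PClause} (hC : C ∈ F) (hw : C.card ≤ w) : DerW F w C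
  | res {A B : PClause} {x : PVar} (hA : DerW F w A) (hB : DerW F w B)
      (hxA : (x, true) ∈ A) (hxB : (x, false) ∈ B)
      (hw : (A.erase (x, true) ∪ B.erase (x, false)).card ≤ w) :
      DerW F w (A.erase (x, true) ∪ B.erase (x, false))

theorem DerW.card_le {F : PCnf} {w : ℕ} {C : PClause} (h : DerW F w C) : C.card ≤ w := by
  cases h with
  | hyp _ hw => exact hw
  | res _ _ _ _ hw => exact hw

/-- Sign-generic resolution step. -/
theorem DerW.res' {F : PCnf} {w : ℕ} {A B : PClause} {m : PLit}
    (hA : DerW F w A) (hB : DerW F w B) (hmA : m ∈ A) (hmB : m.neg ∈ B)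
    (hw : (A.erase m ∪ B.erase m.neg).card ≤ w) :
    DerW F w (A.erase m ∪ B.erase m.neg) := by
  obtain ⟨x, b⟩ := m
  cases b with
  | true =>
    have h := DerW.res hA hB hmA (by simpa [PLit.neg] using hmB)
      (by simpa [PLit.neg] using hw)
    simpa [PLit.neg] using h
  | false =>
    have h := DerW.res hB hA (by simpa [PLit.neg] using hmB) hmA
      (by rw [Finset.union_comm]; simpa [PLit.neg] using hw)
    rw [Finset.union_comm] at h
    simpa [PLit.neg] using h

/-- Clean-up lemma: repeatedly resolve away the literals of `E` outside `B₀`,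
using for each such literal a derivable "counter-clause". -/
theorem DerW.cleanup {F : PCnf} {w : ℕ} {B₀ : PClause} :
    ∀ (c : ℕ) (E : PClause), (E \ B₀).card ≤ c → DerW F w E →
    (∀ m ∈ E, m ∉ B₀ → ∃ D, DerW F w D ∧ D ⊆ insert m.neg B₀) →
    B₀.card + (E \ B₀).card ≤ w →
    ∃ E', DerW F w E' ∧ E' ⊆ B₀ := by
  intro c
  induction c with
  | zero =>
    intro E hc hE _ _
    refine ⟨E, hE, ?_⟩
    rw [← Finset.sdiff_eq_empty_iff_subset]
    exact Finset.card_eq_zero.1 (Nat.le_zero.1 hc)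
  | succ c IH =>
    intro E hc hE hrem hw
    by_cases hsub : E ⊆ B₀
    · exact ⟨E, hE, hsub⟩
    · obtain ⟨m, hm⟩ := Finset.sdiff_nonempty.2 hsub
      have hmE : m ∈ E := (Finset.mem_sdiff.1 hm).1
      have hmB : m ∉ B₀ := (Finset.mem_sdiff.1 hm).2
      obtain ⟨D, hDder, hDsub⟩ := hrem m hmE hmB
      by_cases hnegD : m.neg ∈ D
      · -- resolve E with D on m
        have hDB : D.erase m.neg ⊆ B₀ := by
          intro x hx
          have hxD := Finset.mem_of_mem_erase hx
          rcases Finset.mem_insert.1 (hDsub hxD) with h | h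
          · exact absurd h (Finset.ne_of_mem_erase hx)
          · exact h
        have hsub2 : (E.erase m ∪ D.erase m.neg) \ B₀ ⊆ (E \ B₀).erase m := by
          intro x hx
          have hx' := Finset.mem_sdiff.1 hx
          rcases Finset.mem_union.1 hx'.1 with h | h
          · exact Finset.mem_erase.2 ⟨Finset.ne_of_mem_erase h,
              Finset.mem_sdiff.2 ⟨Finset.mem_of_mem_erase h, hx'.2⟩⟩
          · exact absurd (hDB h) hx'.2
        have hcard1 : 1 ≤ (E \ B₀).card := Finset.card_pos.2 ⟨m, hm⟩
        have hcardsub : ((E \ B₀).erase m).card = (E \ B₀).card - 1 :=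
          Finset.card_erase_of_mem hm
        have hsplit : ∀ S : PClause, S.card ≤ (S \ B₀).card + B₀.card := by
          intro S
          calc S.card ≤ ((S \ B₀) ∪ B₀).card := by
                apply Finset.card_le_card
                intro x hx
                by_cases hxB : x ∈ B₀
                · exact Finset.mem_union_right _ hxB
                · exact Finset.mem_union_left _ (Finset.mem_sdiff.2 ⟨hx, hxB⟩)
            _ ≤ (S \ B₀).card + B₀.card := Finset.card_union_le _ _
        have hcard2 : ((E.erase m ∪ D.erase m.neg) \ B₀).card ≤ (E \ B₀).card - 1 :=
          le_trans (Finset.card_le_card hsub2) (le_of_eq hcardsub)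
        have hE₂w : (E.erase m ∪ D.erase m.neg).card ≤ w := by
          have := hsplit (E.erase m ∪ D.erase m.neg)
          omega
        have hder2 := DerW.res' hE hDder hmE hnegD hE₂w
        apply IH (E.erase m ∪ D.erase m.neg) (by omega) hder2
        · intro x hx hxB
          have hx2 : x ∈ (E \ B₀).erase m := hsub2 (Finset.mem_sdiff.2 ⟨hx, hxB⟩)
          have hxE : x ∈ E := (Finset.mem_sdiff.1 (Finset.mem_of_mem_erase hx2)).1
          exact hrem x hxE hxB
        · omega
      · refine ⟨D, hDder, ?_⟩
        intro x hx
        rcases Finset.mem_insert.1 (hDsub hx) with h | h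
        · exact absurd (h ▸ hx) hnegD
        · exact h

theorem clog_half {m n : ℕ} (hm : 1 ≤ m) (h : 2 * m ≤ n) :
    Nat.clog 2 m + 1 ≤ Nat.clog 2 n := by
  have hn2 : 2 ≤ n := by omega
  have hc1 : 1 ≤ Nat.clog 2 n := by
    by_contra hcon
    have h0 : Nat.clog 2 n ≤ 0 := by omega
    have := (Nat.clog_le_iff_le_pow (by norm_num)).1 h0
    simp at this
    omega
  have hn : n ≤ 2 ^ Nat.clog 2 n := Nat.le_pow_clog (by norm_num) n
  have hsplit : 2 ^ Nat.clog 2 n = 2 * 2 ^ (Nat.clog 2 n - 1) := by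
    conv_lhs => rw [show Nat.clog 2 n = (Nat.clog 2 n - 1) + 1 by omega]
    rw [pow_succ]
    ring
  have hm2 : m ≤ 2 ^ (Nat.clog 2 n - 1) := by omega
  have := (Nat.clog_le_iff_le_pow (by norm_num)).2 hm2
  omega

theorem PTree.concl_mem_labels (t : PTree) : t.concl ∈ t.labels := by
  cases t <;> simp [PTree.concl, PTree.labels]

theorem PTree.leaves_pos (t : PTree) : 1 ≤ t.leaves := by
  induction t with
  | leaf D => simp [PTree.leaves]
  | node D t₁ t₂ ih₁ ih₂ => simp [PTree.leaves]; omega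

/-- **Main lemma**: from a structurally valid tree-like Res(l) derivation whose
conclusion is "falsified" by the true literals `ρ ∪ U` together with the refuted
terms `R`, we can derive (in width-`w` resolution from `F`) a subclause of `¬ρ`.
Here `U` is a set of literals with derivable pseudo-unit clauses, and `R` is a set
of terms with derivable refuting clauses. -/
theorem ML {F : PCnf} {k l w : ℕ} (hF : ∀ C ∈ F, C.card ≤ k) :
    ∀ t : PTree, t.okStruct F.toHyps → (∀ X ∈ t.labels, IsLDnf l X) →
    ∀ (ρ U : Finset PLit) (R : Finset PTerm),
    (∀ m ∈ ρ, m.neg ∉ ρ) →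
    (∀ μ ∈ U, μ ∈ ρ ∨ ∃ C, DerW F w C ∧ C ⊆ insert μ (nimg ρ)) →
    (∀ T ∈ R, T.card ≤ l ∧
      ((∃ μ ∈ T, μ.neg ∈ T) ∨ ∃ E, DerW F w E ∧ E ⊆ nimg ρ ∪ nimg T)) →
    (∀ T ∈ t.concl, T ∈ R ∨ ∃ m ∈ T, m.neg ∈ ρ ∪ U) →
    l * Nat.clog 2 t.leaves + ρ.card + max k l ≤ w →
    ∃ C, DerW F w C ∧ C ⊆ nimg ρ := by
  intro t
  induction t with
  | leaf D =>
    intro hok hlab ρ U R hcons hU hR hfals hw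
    have hwk : ρ.card + max k l ≤ w := by omega
    rcases hok with hhyp | ⟨T₀, hT₀ne, rfl⟩
    · -- hypothesis leaf
      obtain ⟨C, hCF, rfl⟩ := Finset.mem_image.1 hhyp
      have hCk : C.card ≤ k := hF C hCF
      have hCder : DerW F w C := DerW.hyp hCF (by omega)
      apply DerW.cleanup (C \ nimg ρ).card C le_rfl hCder
      · intro m hmC hmB
        have hterm : ({m} : PTerm) ∈ (PTree.leaf C.toDnf).concl := by
          show ({m} : PTerm) ∈ C.toDnf
          exact Finset.mem_image.2 ⟨m, hmC, rfl⟩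
        rcases hfals _ hterm with hRm | ⟨m', hm', hm'u⟩
        · obtain ⟨_, htaut | ⟨E, hEder, hEsub⟩⟩ := hR _ hRm
          · obtain ⟨μ, hμ1, hμ2⟩ := htaut
            rw [Finset.mem_singleton] at hμ1 hμ2
            exact absurd (hμ1 ▸ hμ2) (PLit.neg_ne m)
          · refine ⟨E, hEder, ?_⟩
            intro x hx
            rcases Finset.mem_union.1 (hEsub hx) with h | h
            · exact Finset.mem_insert_of_mem h
            · rw [show nimg {m} = {m.neg} from Finset.image_singleton _ _] at h
              rw [Finset.mem_singleton] at h
              exact h ▸ Finset.mem_insert_self _ _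
        · rw [Finset.mem_singleton] at hm'
          subst hm'
          rcases Finset.mem_union.1 hm'u with h | h
          · exact absurd (mem_nimg.2 h) hmB
          · rcases hU _ h with h' | ⟨C₂, hC₂der, hC₂sub⟩
            · exact absurd (mem_nimg.2 h') hmB
            · exact ⟨C₂, hC₂der, hC₂sub⟩
      · have h1 : (nimg ρ).card ≤ ρ.card := nimg_card_le ρ
        have h2 : (C \ nimg ρ).card ≤ C.card := Finset.card_le_card (Finset.sdiff_subset)
        have h3 : k ≤ max k l := le_max_left _ _
        omega
    · -- axiom leaf
      have hfals' : ∀ T ∈ insert T₀ T₀.negLits, T ∈ R ∨ ∃ m ∈ T, m.neg ∈ ρ ∪ U := by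
        simpa [PTree.concl] using hfals
      have hsing : ∀ m ∈ T₀, ({m.neg} : PTerm) ∈ R ∨ m ∈ ρ ∨ m ∈ U := by
        intro m hm
        have hterm : ({m.neg} : PTerm) ∈ insert T₀ T₀.negLits :=
          Finset.mem_insert_of_mem (Finset.mem_image.2 ⟨m, hm, rfl⟩)
        rcases hfals' _ hterm with h | ⟨m', hm', hm'u⟩
        · exact Or.inl h
        · rw [Finset.mem_singleton] at hm'
          subst hm'
          rw [PLit.neg_neg] at hm'u
          exact Or.inr (Finset.mem_union.1 hm'u)
      have star : ∀ m ∈ T₀, m ∈ ρ ∨ ∃ Cm, DerW F w Cm ∧ Cm ⊆ insert m (nimg ρ) := by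
        intro m hm
        rcases hsing m hm with hRs | hρ | hUm
        · right
          obtain ⟨_, htaut | ⟨E, hEder, hEsub⟩⟩ := hR _ hRs
          · obtain ⟨μ, hμ1, hμ2⟩ := htaut
            rw [Finset.mem_singleton] at hμ1 hμ2
            exact absurd (hμ1 ▸ hμ2) (PLit.neg_ne m.neg)
          · refine ⟨E, hEder, ?_⟩
            intro x hx
            rcases Finset.mem_union.1 (hEsub hx) with h | h
            · exact Finset.mem_insert_of_mem h
            · rw [show nimg {m.neg} = {m.neg.neg} from Finset.image_singleton _ _,
                PLit.neg_neg] at h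
              rw [Finset.mem_singleton] at h
              exact h ▸ Finset.mem_insert_self _ _
        · exact Or.inl hρ
        · exact hU _ hUm
      -- resolving two opposite pseudo-units
      have resolved : ∀ (a : PLit) (Ca Cb : PClause), DerW F w Ca → DerW F w Cb →
          Ca ⊆ insert a (nimg ρ) → Cb ⊆ insert a.neg (nimg ρ) →
          ∃ C, DerW F w C ∧ C ⊆ nimg ρ := by
        intro a Ca Cb hCa hCb hCas hCbs
        by_cases haCa : a ∈ Ca
        · by_cases haCb : a.neg ∈ Cb
          · have hsub : Ca.erase a ∪ Cb.erase a.neg ⊆ nimg ρ := by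
              intro x hx
              rcases Finset.mem_union.1 hx with h | h
              · rcases Finset.mem_insert.1 (hCas (Finset.mem_of_mem_erase h)) with h' | h'
                · exact absurd h' (Finset.ne_of_mem_erase h)
                · exact h'
              · rcases Finset.mem_insert.1 (hCbs (Finset.mem_of_mem_erase h)) with h' | h'
                · exact absurd h' (Finset.ne_of_mem_erase h)
                · exact h'
            have hwid : (Ca.erase a ∪ Cb.erase a.neg).card ≤ w := by
              have := Finset.card_le_card hsub
              have := nimg_card_le ρ
              omega
            exact ⟨_, DerW.res' hCa hCb haCa haCb hwid, hsub⟩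
          · refine ⟨Cb, hCb, ?_⟩
            intro x hx
            rcases Finset.mem_insert.1 (hCbs hx) with h | h
            · exact absurd (h ▸ hx) haCb
            · exact h
        · refine ⟨Ca, hCa, ?_⟩
          intro x hx
          rcases Finset.mem_insert.1 (hCas hx) with h | h
          · exact absurd (h ▸ hx) haCa
          · exact h
      rcases hfals' T₀ (Finset.mem_insert_self _ _) with hT₀R | ⟨m₀, hm₀, hm₀u⟩
      · obtain ⟨hT₀l, htaut | ⟨E, hEder, hEsub⟩⟩ := hR _ hT₀R
        · obtain ⟨μ, hμ1, hμ2⟩ := htaut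
          rcases star μ hμ1 with hρ1 | ⟨Ca, hCa, hCas⟩
          · rcases star μ.neg hμ2 with hρ2 | ⟨Cb, hCb, hCbs⟩
            · exact absurd hρ2 (hcons μ hρ1)
            · refine ⟨Cb, hCb, ?_⟩
              have : μ.neg ∈ nimg ρ := mem_nimg.2 (by rwa [PLit.neg_neg])
              rwa [Finset.insert_eq_self.2 this] at hCbs
          · rcases star μ.neg hμ2 with hρ2 | ⟨Cb, hCb, hCbs⟩
            · refine ⟨Ca, hCa, ?_⟩
              have : μ ∈ nimg ρ := mem_nimg.2 hρ2
              rwa [Finset.insert_eq_self.2 this] at hCas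
            · exact resolved μ Ca Cb hCa hCb hCas hCbs
        · -- E refutes T₀; clean it up using the pseudo-units from `star`
          apply DerW.cleanup (E \ nimg ρ).card E le_rfl hEder
          · intro m hmE hmB
            have hmT : m ∈ nimg T₀ := by
              rcases Finset.mem_union.1 (hEsub hmE) with h | h
              · exact absurd h hmB
              · exact h
            have hmT' : m.neg ∈ T₀ := mem_nimg.1 hmT
            rcases star m.neg hmT' with hρ1 | ⟨Cm, hCm, hCms⟩
            · exact absurd (mem_nimg.2 hρ1) hmB
            · exact ⟨Cm, hCm, hCms⟩
          · have h1 : (nimg ρ).card ≤ ρ.card := nimg_card_le ρ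
            have h2 : (E \ nimg ρ).card ≤ (nimg T₀).card := by
              apply Finset.card_le_card
              intro x hx
              have hx' := Finset.mem_sdiff.1 hx
              rcases Finset.mem_union.1 (hEsub hx'.1) with h | h
              · exact absurd h hx'.2
              · exact h
            have h3 : (nimg T₀).card ≤ T₀.card := nimg_card_le T₀
            have h4 : l ≤ max k l := le_max_right _ _
            omega
      · -- some literal of T₀ is falsified
        rcases Finset.mem_union.1 hm₀u with hρn | hUn
        · rcases star m₀ hm₀ with hρ1 | ⟨Cm, hCm, hCms⟩
          · exact absurd hρn (hcons m₀ hρ1)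
          · refine ⟨Cm, hCm, ?_⟩
            have : m₀ ∈ nimg ρ := mem_nimg.2 hρn
            rwa [Finset.insert_eq_self.2 this] at hCms
        · rcases hU _ hUn with hρn | ⟨Cb, hCb, hCbs⟩
          · rcases star m₀ hm₀ with hρ1 | ⟨Cm, hCm, hCms⟩
            · exact absurd hρn (hcons m₀ hρ1)
            · refine ⟨Cm, hCm, ?_⟩
              have : m₀ ∈ nimg ρ := mem_nimg.2 hρn
              rwa [Finset.insert_eq_self.2 this] at hCms
          · rcases star m₀ hm₀ with hρ1 | ⟨Cm, hCm, hCms⟩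
            · refine ⟨Cb, hCb, ?_⟩
              have : m₀.neg ∈ nimg ρ := mem_nimg.2 (by rwa [PLit.neg_neg])
              rwa [Finset.insert_eq_self.2 this] at hCbs
            · exact resolved m₀ Cm Cb hCm hCb hCms hCbs
  | node D u1 u2 IH1 IH2 =>
    intro hok hlab ρ U R hcons hU hR hfals hw
    obtain ⟨ok1, ok2, T₂, A₂, B₂, hTne, hc1, hc2, hD⟩ := hok
    have hlab1 : ∀ X ∈ u1.labels, IsLDnf l X := by
      intro X hX
      exact hlab X (by simp [PTree.labels]; tauto)
    have hlab2 : ∀ X ∈ u2.labels, IsLDnf l X := by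
      intro X hX
      exact hlab X (by simp [PTree.labels]; tauto)
    have hT₂l : T₂.card ≤ l := by
      have h := hlab1 u1.concl (PTree.concl_mem_labels u1)
      rw [hc1] at h
      exact h T₂ (Finset.mem_insert_self _ _)
    have hl1 : 1 ≤ l := le_trans (Finset.card_pos.2 hTne) hT₂l
    have hfalsD : ∀ T ∈ (A₂ ∪ B₂ : PDnf), T ∈ R ∨ ∃ m ∈ T, m.neg ∈ ρ ∪ U := by
      intro T hT
      exact hfals T (by simp only [PTree.concl]; exact hD ▸ hT)
    have hfalsA : ∀ T ∈ A₂, T ∈ R ∨ ∃ m ∈ T, m.neg ∈ ρ ∪ U :=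
      fun T hT => hfalsD T (Finset.mem_union_left _ hT)
    have hfalsB : ∀ T ∈ B₂, T ∈ R ∨ ∃ m ∈ T, m.neg ∈ ρ ∪ U :=
      fun T hT => hfalsD T (Finset.mem_union_right _ hT)
    have hlv1 : 1 ≤ u1.leaves := PTree.leaves_pos u1
    have hlv2 : 1 ≤ u2.leaves := PTree.leaves_pos u2
    have hlvt : (PTree.node D u1 u2).leaves = u1.leaves + u2.leaves := rfl
    have hw' : l * Nat.clog 2 (u1.leaves + u2.leaves) + ρ.card + max k l ≤ w := by
      rw [← hlvt]; exact hw
    have hmono1 : Nat.clog 2 u1.leaves ≤ Nat.clog 2 (u1.leaves + u2.leaves) :=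
      Nat.clog_mono_right 2 (by omega)
    have hmono2 : Nat.clog 2 u2.leaves ≤ Nat.clog 2 (u1.leaves + u2.leaves) :=
      Nat.clog_mono_right 2 (by omega)
    by_cases h0 : T₂ ∈ R ∨ ∃ μ ∈ T₂, μ.neg ∈ ρ ∪ U
    · -- the cut term is already handled: use only the left subtree
      apply IH1 ok1 hlab1 ρ U R hcons hU hR
      · intro T hT
        rw [hc1] at hT
        rcases Finset.mem_insert.1 hT with rfl | hT'
        · exact h0
        · exact hfalsA T hT'
      · have := Nat.mul_le_mul_left l hmono1
        omega
    · push_neg at h0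
      obtain ⟨h0R, h0f⟩ := h0
      by_cases h1 : 2 * u1.leaves ≤ u1.leaves + u2.leaves
      · -- Case A : left subtree is small. Derive pseudo-units for T₂ from u1,
        -- then recurse into u2 with U ∪ T₂.
        have hpunit : ∀ μ ∈ T₂, μ ∈ ρ ∨ ∃ C, DerW F w C ∧ C ⊆ insert μ (nimg ρ) := by
          intro μ hμ
          by_cases hμρ : μ ∈ ρ
          · exact Or.inl hμρ
          · right
            have hcons' : ∀ p ∈ insert μ.neg ρ, p.neg ∉ insert μ.neg ρ := by
              intro p hp
              rcases Finset.mem_insert.1 hp with rfl | hp'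
              · rw [PLit.neg_neg]
                intro hcon
                rcases Finset.mem_insert.1 hcon with h | h
                · exact PLit.neg_ne μ h.symm
                · exact hμρ h
              · intro hcon
                rcases Finset.mem_insert.1 hcon with h | h
                · have : p = μ := by rw [← PLit.neg_neg p, h, PLit.neg_neg]
                  exact hμρ (this ▸ hp')
                · exact hcons p hp' h
            have hsubρ : ρ ⊆ insert μ.neg ρ := Finset.subset_insert _ _
            have hsubn : nimg ρ ⊆ nimg (insert μ.neg ρ) := nimg_mono hsubρ
            obtain ⟨C, hCder, hCsub⟩ := IH1 ok1 hlab1 (insert μ.neg ρ) U R hcons'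
              (fun ν hν => (hU ν hν).imp (fun h => hsubρ h)
                (fun ⟨C, hd, hs⟩ => ⟨C, hd, hs.trans (Finset.insert_subset_insert _ hsubn)⟩))
              (fun T hT => ⟨(hR T hT).1, (hR T hT).2.imp id
                (fun ⟨E, hd, hs⟩ => ⟨E, hd, hs.trans (Finset.union_subset_union hsubn le_rfl)⟩)⟩)
              (by
                intro T hT
                rw [hc1] at hT
                rcases Finset.mem_insert.1 hT with rfl | hT'
                · exact Or.inr ⟨μ, hμ, Finset.mem_union_left _ (Finset.mem_insert_self _ _)⟩
                · exact (hfalsA T hT').imp id (fun ⟨m, hm, hmu⟩ => ⟨m, hm, by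
                    rcases Finset.mem_union.1 hmu with h | h
                    · exact Finset.mem_union_left _ (hsubρ h)
                    · exact Finset.mem_union_right _ h⟩))
              (by
                have hcardi : (insert μ.neg ρ).card ≤ ρ.card + 1 := Finset.card_insert_le _ _
                have hch := clog_half hlv1 h1
                have := Nat.mul_le_mul_left l hch
                rw [Nat.mul_add, Nat.mul_one] at this
                omega)
            refine ⟨C, hCder, ?_⟩
            rwa [nimg_insert, PLit.neg_neg] at hCsub
        apply IH2 ok2 hlab2 ρ (U ∪ T₂) R hcons
        · intro ν hν
          rcases Finset.mem_union.1 hν with h | h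
          · exact hU ν h
          · exact hpunit ν h
        · exact hR
        · intro T hT
          rw [hc2] at hT
          rcases Finset.mem_union.1 hT with hT' | hT'
          · exact (hfalsB T hT').imp id (fun ⟨m, hm, hmu⟩ => ⟨m, hm, by
              rcases Finset.mem_union.1 hmu with h | h
              · exact Finset.mem_union_left _ h
              · exact Finset.mem_union_right _ (Finset.mem_union_left _ h)⟩)
          · obtain ⟨m, hm, rfl⟩ := Finset.mem_image.1 hT'
            refine Or.inr ⟨m.neg, Finset.mem_singleton_self _, ?_⟩
            rw [PLit.neg_neg]
            exact Finset.mem_union_right _ (Finset.mem_union_right _ hm)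
        · have := Nat.mul_le_mul_left l hmono2
          omega
      · -- right subtree is small
        have h2 : 2 * u2.leaves ≤ u1.leaves + u2.leaves := by omega
        by_cases h3 : ∃ μ ∈ T₂, μ.neg ∈ T₂
        · -- tautological cut term: add it to R for free
          apply IH1 ok1 hlab1 ρ U (insert T₂ R) hcons hU
          · intro T hT
            rcases Finset.mem_insert.1 hT with rfl | hT'
            · exact ⟨hT₂l, Or.inl h3⟩
            · exact hR T hT'
          · intro T hT
            rw [hc1] at hT
            rcases Finset.mem_insert.1 hT with rfl | hT'
            · exact Or.inl (Finset.mem_insert_self _ _)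
            · exact (hfalsA T hT').imp (fun h => Finset.mem_insert_of_mem h) id
          · have := Nat.mul_le_mul_left l hmono1
            omega
        · -- Case B : refute T₂ using the (small) right subtree, then recurse left
          have hconsB : ∀ p ∈ ρ ∪ T₂, p.neg ∉ ρ ∪ T₂ := by
            intro p hp hcon
            rcases Finset.mem_union.1 hp with hp' | hp' <;>
              rcases Finset.mem_union.1 hcon with hc' | hc'
            · exact hcons p hp' hc'
            · exact h0f p.neg hc' (by rw [PLit.neg_neg]; exact Finset.mem_union_left _ hp')
            · exact h0f p hp' (Finset.mem_union_left _ hc')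
            · exact h3 ⟨p, hp', hc'⟩
          have hsubρ : ρ ⊆ ρ ∪ T₂ := Finset.subset_union_left
          have hsubn : nimg ρ ⊆ nimg (ρ ∪ T₂) := nimg_mono hsubρ
          obtain ⟨E₂, hE₂d, hE₂s⟩ := IH2 ok2 hlab2 (ρ ∪ T₂) U R hconsB
            (fun ν hν => (hU ν hν).imp (fun h => hsubρ h)
              (fun ⟨C, hd, hs⟩ => ⟨C, hd, hs.trans (Finset.insert_subset_insert _ hsubn)⟩))
            (fun T hT => ⟨(hR T hT).1, (hR T hT).2.imp id
              (fun ⟨E, hd, hs⟩ => ⟨E, hd, hs.trans (Finset.union_subset_union hsubn le_rfl)⟩)⟩)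
            (by
              intro T hT
              rw [hc2] at hT
              rcases Finset.mem_union.1 hT with hT' | hT'
              · exact (hfalsB T hT').imp id (fun ⟨m, hm, hmu⟩ => ⟨m, hm, by
                  rcases Finset.mem_union.1 hmu with h | h
                  · exact Finset.mem_union_left _ (hsubρ h)
                  · exact Finset.mem_union_right _ h⟩)
              · obtain ⟨m, hm, rfl⟩ := Finset.mem_image.1 hT'
                refine Or.inr ⟨m.neg, Finset.mem_singleton_self _, ?_⟩
                rw [PLit.neg_neg]
                exact Finset.mem_union_left _ (Finset.mem_union_right _ hm))
            (by
              have hcardu : (ρ ∪ T₂).card ≤ ρ.card + T₂.card := Finset.card_union_le _ _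
              have hch := clog_half hlv2 h2
              have := Nat.mul_le_mul_left l hch
              rw [Nat.mul_add, Nat.mul_one] at this
              have hT₂l' := hT₂l
              omega)
          rw [nimg_union] at hE₂s
          apply IH1 ok1 hlab1 ρ U (insert T₂ R) hcons hU
          · intro T hT
            rcases Finset.mem_insert.1 hT with rfl | hT'
            · exact ⟨hT₂l, Or.inr ⟨E₂, hE₂d, hE₂s⟩⟩
            · exact hR T hT'
          · intro T hT
            rw [hc1] at hT
            rcases Finset.mem_insert.1 hT with rfl | hT'
            · exact Or.inl (Finset.mem_insert_self _ _)
            · exact (hfalsA T hT').imp (fun h => Finset.mem_insert_of_mem h) id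
          · have := Nat.mul_le_mul_left l hmono1
            omega

/-- Variables occurring in derived clauses stay below `n`. -/
theorem DerW.vars {F : PCnf} {w n : ℕ} (hvars : ∀ C ∈ F, ∀ m ∈ C, m.1 < n) :
    ∀ {C : PClause}, DerW F w C → ∀ m ∈ C, m.1 < n := by
  intro C h
  induction h with
  | hyp hC _ => exact hvars _ hC
  | res _ _ _ _ _ ihA ihB =>
    intro m hm
    rcases Finset.mem_union.1 hm with h | h
    · exact ihA m (Finset.mem_of_mem_erase h)
    · exact ihB m (Finset.mem_of_mem_erase h)

/-- A "good" list: a duplicate-free resolution derivation all of whose clauses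
are width-`w` derivable. -/
def GoodList (F : PCnf) (w : ℕ) (π : List PClause) : Prop :=
  IsResDeriv F π ∧ π.Nodup ∧ ∀ C ∈ π, DerW F w C

theorem isResDeriv_append {F : PCnf} {π : List PClause} {C : PClause}
    (h : IsResDeriv F π) (hC : C ∈ F ∨ ResStep π C) : IsResDeriv F (π ++ [C]) := by
  intro i
  have hlen : (π ++ [C]).length = π.length + 1 := by simp
  by_cases hi : (i : ℕ) < π.length
  · have hget : (π ++ [C]).get i = π.get ⟨i, hi⟩ := by
      simp [List.get_eq_getElem, List.getElem_append_left hi]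
    have htake : (π ++ [C]).take i = π.take i := by
      rw [List.take_append]
      have : (i : ℕ) - π.length = 0 := by omega
      simp [this]
    rw [hget, htake]
    exact h ⟨i, hi⟩
  · have hieq : (i : ℕ) = π.length := by
      have := i.2
      omega
    have hget : (π ++ [C]).get i = C := by
      simp only [List.get_eq_getElem]
      rw [List.getElem_append_right (by omega)]
      simp [hieq]
    have htake : (π ++ [C]).take i = π := by
      rw [hieq]
      exact List.take_left
    rw [hget, htake]
    exact hC

theorem ResStep_mono {π π' : List PClause} {C : PClause}
    (hsub : ∀ x ∈ π, x ∈ π') (h : ResStep π C) : ResStep π' C := by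
  obtain ⟨A, hA, B, hB, x, h1, h2, h3⟩ := h
  exact ⟨A, hsub A hA, B, hsub B hB, x, h1, h2, h3⟩

/-- Every width-`w` derivable clause can be added to a good list. -/
theorem DerW.toList {F : PCnf} {w : ℕ} {C : PClause} (hC : DerW F w C) :
    ∀ π, GoodList F w π → ∃ π', GoodList F w π' ∧ (∀ x ∈ π, x ∈ π') ∧ C ∈ π' := by
  induction hC with
  | @hyp C hCF hCw =>
    intro π hπ
    by_cases hmem : C ∈ π
    · exact ⟨π, hπ, fun x h => h, hmem⟩
    · refine ⟨π ++ [C], ⟨isResDeriv_append hπ.1 (Or.inl hCF), ?_, ?_⟩,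
        fun x h => by simp [h], by simp⟩
      · rw [List.nodup_append]
        exact ⟨hπ.2.1, List.nodup_singleton C, by
          intro a ha b hb hab
          rw [List.mem_singleton] at hb
          rw [hab, hb] at ha
          exact hmem ha⟩
      · intro D hD
        rcases List.mem_append.1 hD with h | h
        · exact hπ.2.2 D h
        · rw [List.mem_singleton] at h
          exact h ▸ DerW.hyp hCF hCw
  | @res A B x hA hB hxA hxB hwc ihA ihB =>
    intro π hπ
    obtain ⟨π₁, h₁, s₁, mA⟩ := ihA π hπ
    obtain ⟨π₂, h₂, s₂, mB⟩ := ihB π₁ h₁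
    have mA₂ : A ∈ π₂ := s₂ _ mA
    by_cases hmem : A.erase (x, true) ∪ B.erase (x, false) ∈ π₂
    · exact ⟨π₂, h₂, fun y h => s₂ _ (s₁ _ h), hmem⟩
    · refine ⟨π₂ ++ [A.erase (x, true) ∪ B.erase (x, false)],
        ⟨isResDeriv_append h₂.1 (Or.inr ⟨A, mA₂, B, mB, x, hxA, hxB, rfl⟩), ?_, ?_⟩,
        fun y h => by simp [s₂ _ (s₁ _ h)], by simp⟩
      · rw [List.nodup_append]
        exact ⟨h₂.2.1, List.nodup_singleton _, by
          intro a ha b hb hab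
          rw [List.mem_singleton] at hb
          rw [hab, hb] at ha
          exact hmem ha⟩
      · intro D hD
        rcases List.mem_append.1 hD with h | h
        · exact h₂.2.2 D h
        · rw [List.mem_singleton] at h
          exact h ▸ DerW.res hA hB hxA hxB hwc

theorem isResDeriv_take {F : PCnf} {π : List PClause} (h : IsResDeriv F π) (j : ℕ) :
    IsResDeriv F (π.take j) := by
  intro i
  have hi : (i : ℕ) < π.length := by
    have := i.2
    simp only [List.length_take] at this
    omega
  have hget : (π.take j).get i = π.get ⟨i, hi⟩ := by
    simp [List.get_eq_getElem, List.getElem_take]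
  have htake : (π.take j).take i = π.take i := by
    rw [List.take_take]
    congr 1
    have := i.2
    simp only [List.length_take] at this
    omega
  rw [hget, htake]
  exact h ⟨i, hi⟩

/-- Counting clauses of width at most `w` over `n` variables. -/
theorem sum_choose_le (a w : ℕ) :
    ∑ i ∈ Finset.range (w + 1), a.choose i ≤ (a + 1) ^ w := by
  induction w with
  | zero => simp
  | succ w IH =>
    rw [Finset.sum_range_succ]
    have h1 : a.choose (w + 1) ≤ a ^ (w + 1) := Nat.choose_le_pow _ _
    have h2 : a ^ (w + 1) ≤ a * (a + 1) ^ w := by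
      rw [pow_succ']
      exact Nat.mul_le_mul_left a (Nat.pow_le_pow_left (by omega) w)
    have h3 : (a + 1) ^ w + a * (a + 1) ^ w = (a + 1) ^ (w + 1) := by ring
    omega

theorem count_clauses {n w : ℕ} (S : Finset PClause)
    (hS : ∀ D ∈ S, D.card ≤ w ∧ ∀ m ∈ D, m.1 < n) :
    S.card ≤ (2 * n + 1) ^ w := by
  classical
  set Univ : Finset PLit := (Finset.range n) ×ˢ (Finset.univ : Finset Bool) with hUdef
  have hUcard : Univ.card = 2 * n := by
    rw [hUdef, Finset.card_product, Finset.card_range, Finset.card_univ, Fintype.card_bool]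
    ring
  have hsub : S ⊆ (Finset.range (w + 1)).biUnion (fun i => Univ.powersetCard i) := by
    intro D hD
    obtain ⟨hc, hv⟩ := hS D hD
    refine Finset.mem_biUnion.2 ⟨D.card, Finset.mem_range.2 (by omega),
      Finset.mem_powersetCard.2 ⟨?_, rfl⟩⟩
    intro m hm
    exact Finset.mem_product.2 ⟨Finset.mem_range.2 (hv m hm), Finset.mem_univ _⟩
  calc S.card ≤ ((Finset.range (w + 1)).biUnion (fun i => Univ.powersetCard i)).card :=
        Finset.card_le_card hsub
    _ ≤ ∑ i ∈ Finset.range (w + 1), (Univ.powersetCard i).card :=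
        Finset.card_biUnion_le
    _ = ∑ i ∈ Finset.range (w + 1), (2 * n).choose i := by
        apply Finset.sum_congr rfl
        intro i _
        rw [Finset.card_powersetCard, hUcard]
    _ ≤ (2 * n + 1) ^ w := sum_choose_le (2 * n) w

/-- If a `k`-CNF `F` over `n` variables has a tree-like Res(l) refutation
with `L` leaves, then `F` has a resolution refutation of size at most
`(2n+1)^(l·⌈log₂ L⌉ + max k l)`. -/
theorem small_res_of_tree_res
    (n k l L : ℕ) (F : PCnf)
    (hF : ∀ C ∈ F, C.card ≤ k) (hvars : ∀ C ∈ F, ∀ m ∈ C, m.1 < n)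
    (t : PTree) (ht : TreeResRefutation F l t) (hL : t.leaves = L) :
    ∃ π : List PClause, ResDerivOf F ∅ π ∧
      π.length ≤ (2 * n + 1) ^ (l * Nat.clog 2 L + max k l) := by
  obtain ⟨⟨hok, hlab⟩, hconcl⟩ := ht
  set w := l * Nat.clog 2 L + max k l with hwdef
  -- Step 1: a width-`w` derivation of the empty clause
  have hder : DerW F w ∅ := by
    obtain ⟨C, hCd, hCs⟩ := ML (w := w) hF t hok hlab ∅ ∅ ∅
      (by simp) (by simp) (by simp)
      (by rw [hconcl]; intro T hT; exact absurd hT (Finset.notMem_empty T))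
      (by rw [hL, hwdef]; simp)
    have hC : C = ∅ := Finset.subset_empty.1 (by simpa using hCs)
    rwa [hC] at hCd
  -- Step 2: turn it into a duplicate-free derivation list
  have hgood0 : GoodList F w [] := by
    refine ⟨fun i => ?_, List.nodup_nil, by simp⟩
    exact absurd i.2 (by simp)
  obtain ⟨π₀, hgood, _, hmem⟩ := hder.toList [] hgood0
  obtain ⟨i, hi, hieq⟩ := List.mem_iff_getElem.1 hmem
  refine ⟨π₀.take (i + 1), ⟨isResDeriv_take hgood.1 _, ?_⟩, ?_⟩
  · -- last clause is the empty clause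
    have hlen : (π₀.take (i + 1)).length = i + 1 := by
      simp [List.length_take]
      omega
    rw [List.getLast?_eq_getElem?, hlen]
    simp only [Nat.add_sub_cancel, List.getElem?_take, if_pos (Nat.lt_succ_self i)]
    rw [List.getElem?_eq_getElem hi, hieq]
  · -- counting
    have hnodup : (π₀.take (i + 1)).Nodup := (List.take_sublist _ _).nodup hgood.2.1
    have hlenfs : (π₀.take (i + 1)).length = (π₀.take (i + 1)).toFinset.card :=
      (List.toFinset_card_of_nodup hnodup).symm
    rw [hlenfs]
    apply count_clauses
    intro D hD
    have hDπ : D ∈ π₀ := (List.take_sublist _ _).mem (List.mem_toFinset.1 hD)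
    have hDder := hgood.2.2 D hDπ
    exact ⟨hDder.card_le, DerW.vars hvars hDder⟩
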